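/- arXiv:1805.10998 — 2 statements merged into one kernel-verified Lean document; each statement's English description precedes it below -/
import Mathlib

section
/- Let γ(k,i) be the integers defined by the stated recurrence. Then for every given integer k ≥ 1 and every n ≥ 1, LS(n+k, n) = 2^k · Σ_{i=k+2}^{3k} γ(k,i) · C(n+k+1, i), where C(·,·) is the usual binomial coefficient. -/
/-- Legendre-Stirling numbers of the second kind. -/
def LS : ℕ → ℕ → ℕ
  | 0, 0 => 1
  | 0, _ + 1 => 0
  | _ + 1, 0 => 0
  | n + 1, k + 1 => LS n k + (k + 1) * (k + 2) * LS n (k + 1)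

/-- For an integer `m`, the binomial coefficient `C(m, 2) = m(m−1)/2`. -/
def c2 (m : ℤ) : ℤ := m * (m - 1) / 2

/-- The coefficients `γ(k, i)`; note `gam 0 i = δ_{i,0}` and `gam k i = 0` for `i < 0`. -/
def gam : ℕ → ℤ → ℤ
  | 0, i => if i = 0 then 1 else 0
  | k + 1, i =>
      c2 (i - (k : ℤ) - 1) * gam k (i - 1) +
        (i - 1) * (i - (k : ℤ) - 2) * gam k (i - 2) +
        c2 (i - 1) * gam k (i - 3)

lemma c2_two_mul (m : ℤ) : 2 * c2 m = m * (m - 1) := by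
  have h : (2:ℤ) ∣ m * (m - 1) := by
    rcases Int.even_or_odd m with h | h
    · exact Dvd.dvd.mul_right h.two_dvd _
    · have he : Even (m - 1) := by simpa using h.sub_odd odd_one
      exact Dvd.dvd.mul_left he.two_dvd _
  exact Int.mul_ediv_cancel' h

lemma gam_zero (i : ℤ) : gam 0 i = if i = 0 then 1 else 0 := rfl

lemma gam_succ (k : ℕ) (i : ℤ) :
    gam (k + 1) i =
      c2 (i - (k : ℤ) - 1) * gam k (i - 1) +
        (i - 1) * (i - (k : ℤ) - 2) * gam k (i - 2) +
        c2 (i - 1) * gam k (i - 3) := rfl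

lemma gam_succ' (k : ℕ) (i : ℤ) :
    gam (k + 1) (i + 1) =
      c2 (i - (k : ℤ)) * gam k i + i * (i - (k : ℤ) - 1) * gam k (i - 1) +
        c2 i * gam k (i - 2) := by
  rw [gam_succ]
  rw [show i + 1 - (k:ℤ) - 1 = i - k from by ring, show i + 1 - 1 = i from by ring,
    show i + 1 - (k:ℤ) - 2 = i - k - 1 from by ring, show i + 1 - 2 = i - 1 from by ring,
    show i + 1 - 3 = i - 2 from by ring]

lemma gam_high : ∀ (k : ℕ) (i : ℤ), 3 * (k : ℤ) < i → gam k i = 0 := by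
  intro k
  induction k with
  | zero => intro i hi; rw [gam_zero, if_neg (by omega)]
  | succ k ih =>
      intro i hi
      have h1 : gam k (i - 1) = 0 := ih _ (by push_cast at hi ⊢; omega)
      have h2 : gam k (i - 2) = 0 := ih _ (by push_cast at hi ⊢; omega)
      have h3 : gam k (i - 3) = 0 := ih _ (by push_cast at hi ⊢; omega)
      rw [gam_succ, h1, h2, h3]; ring

lemma c2_zero : c2 0 = 0 := rfl
lemma c2_one : c2 1 = 0 := rfl

lemma gam_low : ∀ (k : ℕ), 1 ≤ k → ∀ (i : ℤ), i < (k : ℤ) + 2 → gam k i = 0 := by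
  intro k
  induction k with
  | zero => omega
  | succ k ih =>
      intro _ i hi
      rcases Nat.eq_zero_or_pos k with rfl | hk
      · rw [gam_succ]
        simp only [gam_zero, Nat.cast_zero]
        push_cast at hi
        rcases eq_or_ne i 1 with rfl | h1
        · norm_num [c2]
        · rcases eq_or_ne i 2 with rfl | h2
          · norm_num [c2]
          · have h3 : i ≠ 3 := by omega
            rw [if_neg (by omega), if_neg (by omega), if_neg (by omega)]
            ring
      · have h1 : gam k (i - 1) = 0 := ih hk _ (by push_cast at hi ⊢; omega)
        have h2 : gam k (i - 2) = 0 := ih hk _ (by push_cast at hi ⊢; omega)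
        have h3 : gam k (i - 3) = 0 := ih hk _ (by push_cast at hi ⊢; omega)
        rw [gam_succ, h1, h2, h3]; ring

lemma LS_lt (n : ℕ) : ∀ k, n < k → LS n k = 0 := by
  induction n with
  | zero =>
      intro k hk
      match k, hk with
      | k + 1, _ => rfl
  | succ n ih =>
      intro k hk
      match k, hk with
      | k + 1, hk => simp [LS, ih k (by omega), ih (k + 1) (by omega)]

lemma LS_diag (n : ℕ) : LS n n = 1 := by
  induction n with
  | zero => rfl
  | succ n ih => simp [LS, ih, LS_lt n (n + 1) (by omega)]

lemma choose_shift (N j : ℕ) :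
    ((j : ℤ) + 1) * (N.choose (j + 1) : ℤ) = ((N : ℤ) - j) * (N.choose j : ℤ) := by
  rcases le_or_gt j N with h | h
  · have h2 : ((N.choose (j + 1) * (j + 1) : ℕ) : ℤ) = ((N.choose j * (N - j) : ℕ) : ℤ) := by
      exact_mod_cast congrArg (Nat.cast : ℕ → ℤ) (Nat.choose_succ_right_eq N j)
    push_cast [Nat.cast_sub h] at h2
    linarith
  · rw [Nat.choose_eq_zero_of_lt h, Nat.choose_eq_zero_of_lt (by omega)]
    simp
lemma shift1 (M : ℕ) (f : ℕ → ℤ) (h0 : f 0 = 0) (hM : f M = 0) :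
    ∑ i ∈ Finset.range M, f i = ∑ i ∈ Finset.range M, f (i + 1) := by
  have h1 := Finset.sum_range_succ' f M
  have h2 := Finset.sum_range_succ f M
  rw [h0, hM] at *
  linarith

lemma pointwise (k N j : ℕ) :
    2 * c2 ((j : ℤ) - k) * (N.choose j : ℤ) +
      2 * ((j : ℤ) + 1) * ((j : ℤ) - k) * (N.choose (j + 1) : ℤ) +
      2 * c2 ((j : ℤ) + 2) * (N.choose (j + 2) : ℤ) =
    ((N : ℤ) - k - 1) * ((N : ℤ) - k) * (N.choose j : ℤ) := by
  have e1 := choose_shift N j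
  have e2 := choose_shift N (j + 1)
  push_cast at e2
  rw [c2_two_mul, c2_two_mul]
  have h22 : (2 : ℤ) * (((j:ℤ)+1) * ((j:ℤ)-k)) = 2*((j:ℤ)+1)*((j:ℤ)-k) := by ring
  linear_combination (2 * ((j:ℤ) - k) + ((N:ℤ) - j - 1)) * e1 + ((j:ℤ) + 1) * e2
lemma key_sum (k n : ℕ) :
    2 * ∑ i ∈ Finset.range (3 * k + 3), gam (k + 1) ((i : ℤ) + 1) * ((n + k + 2).choose i : ℤ) =
      ((n : ℤ) + 1) * ((n : ℤ) + 2) *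
        ∑ j ∈ Finset.range (3 * k + 1), gam k (j : ℤ) * ((n + k + 2).choose j : ℤ) := by
  set N := n + k + 2 with hN
  set M := 3 * k + 3 with hM
  have expand :
      2 * ∑ i ∈ Finset.range M, gam (k + 1) ((i : ℤ) + 1) * (N.choose i : ℤ) =
        (∑ i ∈ Finset.range M, 2 * c2 ((i:ℤ) - k) * gam k (i:ℤ) * (N.choose i : ℤ)) +
        (∑ i ∈ Finset.range M, 2 * (i:ℤ) * ((i:ℤ) - k - 1) * gam k ((i:ℤ) - 1) * (N.choose i : ℤ)) +
        (∑ i ∈ Finset.range M, 2 * c2 (i:ℤ) * gam k ((i:ℤ) - 2) * (N.choose i : ℤ)) := by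
    rw [Finset.mul_sum, ← Finset.sum_add_distrib, ← Finset.sum_add_distrib]
    refine Finset.sum_congr rfl fun i _ => ?_
    rw [gam_succ']
    ring
  have shiftB :
      (∑ i ∈ Finset.range M, 2 * (i:ℤ) * ((i:ℤ) - k - 1) * gam k ((i:ℤ) - 1) * (N.choose i : ℤ)) =
        ∑ j ∈ Finset.range M, 2 * ((j:ℤ) + 1) * ((j:ℤ) - k) * gam k (j:ℤ) * (N.choose (j + 1) : ℤ) := by
    rw [shift1 M _ (by norm_num) (by
      have h := gam_high k ((M:ℤ) - 1) (by push_cast [hM]; omega)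
      rw [h]; ring)]
    refine Finset.sum_congr rfl fun j _ => ?_
    push_cast
    ring_nf
  have shiftC :
      (∑ i ∈ Finset.range M, 2 * c2 (i:ℤ) * gam k ((i:ℤ) - 2) * (N.choose i : ℤ)) =
        ∑ j ∈ Finset.range M, 2 * c2 ((j:ℤ) + 2) * gam k (j:ℤ) * (N.choose (j + 2) : ℤ) := by
    rw [shift1 M _ (by simp [c2_zero]) (by
      have h := gam_high k ((M:ℤ) - 2) (by push_cast [hM]; omega)
      rw [h]; ring)]
    rw [shift1 M _ (by norm_num [c2_one]) (by
      have h : gam k (((M + 1 : ℕ) : ℤ) - 2) = 0 := gam_high k _ (by push_cast [hM]; omega)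
      rw [h]; ring)]
    refine Finset.sum_congr rfl fun j _ => ?_
    push_cast
    ring_nf
  rw [expand, shiftB, shiftC, ← Finset.sum_add_distrib, ← Finset.sum_add_distrib]
  have combined :
      (∑ j ∈ Finset.range M,
        (2 * c2 ((j:ℤ) - k) * gam k (j:ℤ) * (N.choose j : ℤ) +
          2 * ((j:ℤ) + 1) * ((j:ℤ) - k) * gam k (j:ℤ) * (N.choose (j + 1) : ℤ) +
          2 * c2 ((j:ℤ) + 2) * gam k (j:ℤ) * (N.choose (j + 2) : ℤ))) =
        ∑ j ∈ Finset.range M, ((N:ℤ) - k - 1) * ((N:ℤ) - k) * (gam k (j:ℤ) * (N.choose j : ℤ)) := by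
    refine Finset.sum_congr rfl fun j _ => ?_
    linear_combination gam k (j:ℤ) * pointwise k N j
  rw [combined, ← Finset.mul_sum]
  have trunc :
      (∑ j ∈ Finset.range M, gam k (j:ℤ) * (N.choose j : ℤ)) =
        ∑ j ∈ Finset.range (3 * k + 1), gam k (j:ℤ) * (N.choose j : ℤ) := by
    rw [hM, show 3 * k + 3 = (3 * k + 2) + 1 from rfl, Finset.sum_range_succ,
      show 3 * k + 2 = (3 * k + 1) + 1 from rfl, Finset.sum_range_succ,
      gam_high k _ (by push_cast; omega), gam_high k _ (by push_cast; omega)]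
    ring
  rw [trunc]
  have : ((N:ℤ) - k - 1) = (n:ℤ) + 1 := by push_cast [hN]; ring
  rw [this, show ((N:ℤ) - k) = (n:ℤ) + 2 from by push_cast [hN]; ring]
lemma pascal_diff (k n : ℕ) :
    ∑ i ∈ Finset.range (3 * k + 4), gam (k + 1) (i : ℤ) * ((n + k + 3).choose i : ℤ) =
      (∑ i ∈ Finset.range (3 * k + 4), gam (k + 1) (i : ℤ) * ((n + k + 2).choose i : ℤ)) +
        ∑ i ∈ Finset.range (3 * k + 3), gam (k + 1) ((i : ℤ) + 1) * ((n + k + 2).choose i : ℤ) := by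
  rw [show 3 * k + 4 = (3 * k + 3) + 1 from rfl,
    Finset.sum_range_succ' (fun i => gam (k + 1) (i : ℤ) * ((n + k + 3).choose i : ℤ)) (3 * k + 3),
    Finset.sum_range_succ' (fun i => gam (k + 1) (i : ℤ) * ((n + k + 2).choose i : ℤ)) (3 * k + 3)]
  have h : ∀ i ∈ Finset.range (3 * k + 3),
      gam (k + 1) ((i + 1 : ℕ) : ℤ) * ((n + k + 3).choose (i + 1) : ℤ) =
        gam (k + 1) ((i + 1 : ℕ) : ℤ) * ((n + k + 2).choose (i + 1) : ℤ) +
          gam (k + 1) ((i : ℤ) + 1) * ((n + k + 2).choose i : ℤ) := by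
    intro i _
    have hc : ((n + k + 3).choose (i + 1) : ℤ) =
        ((n + k + 2).choose i : ℤ) + ((n + k + 2).choose (i + 1) : ℤ) := by
      rw [show n + k + 3 = (n + k + 2) + 1 from rfl]
      exact_mod_cast congrArg (Nat.cast : ℕ → ℤ) (Nat.choose_succ_succ (n + k + 2) i)
    push_cast
    push_cast at hc
    rw [hc]
    ring
  rw [Finset.sum_congr rfl h, Finset.sum_add_distrib]
  push_cast [Nat.choose_zero_right]
  ring

theorem LS_aux (k : ℕ) : ∀ n : ℕ, (LS (n + k) n : ℤ) =
    2 ^ k * ∑ i ∈ Finset.range (3 * k + 1), gam k (i : ℤ) * ((n + k + 1).choose i : ℤ) := by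
  induction k with
  | zero =>
      intro n
      simp [LS_diag, Finset.sum_range_one, gam_zero]
  | succ k ih =>
      intro n
      induction n with
      | zero =>
          rw [Nat.zero_add]
          have hL : LS (k + 1) 0 = 0 := rfl
          rw [hL]
          rw [Finset.sum_eq_zero, mul_zero, Nat.cast_zero]
          intro i hi
          rcases le_or_gt i (k + 2) with h | h
          · rw [gam_low (k + 1) (by omega) (i : ℤ) (by push_cast; omega), zero_mul]
          · rw [Nat.choose_eq_zero_of_lt (by omega)]
            push_cast
            ring
      | succ n ihn =>
          have hLS : LS (n + 1 + (k + 1)) (n + 1) =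
              LS (n + k + 1) n + (n + 1) * (n + 2) * LS (n + k + 1) (n + 1) := by
            rw [show n + 1 + (k + 1) = (n + k + 1) + 1 from by omega]
            rfl
          have h1 : (LS (n + k + 1) n : ℤ) =
              2 ^ (k + 1) * ∑ i ∈ Finset.range (3 * (k + 1) + 1),
                gam (k + 1) (i : ℤ) * ((n + (k + 1) + 1).choose i : ℤ) := by
            rw [show n + k + 1 = n + (k + 1) from by omega]
            exact ihn
          have h2 : (LS (n + k + 1) (n + 1) : ℤ) =
              2 ^ k * ∑ j ∈ Finset.range (3 * k + 1),
                gam k (j : ℤ) * ((n + 1 + k + 1).choose j : ℤ) := by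
            rw [show n + k + 1 = (n + 1) + k from by omega]
            exact ih (n + 1)
          rw [hLS]
          push_cast
          rw [h1, h2]
          have key := key_sum k n
          have pas := pascal_diff k n
          rw [show 3 * (k + 1) + 1 = 3 * k + 4 from by omega] at *
          rw [show n + 1 + (k + 1) + 1 = n + k + 3 from by omega,
            show n + (k + 1) + 1 = n + k + 2 from by omega,
            show n + 1 + k + 1 = n + k + 2 from by omega]
          rw [pas]
          linear_combination (-(2:ℤ) ^ k) * key

theorem LS_binomial_expansion (k : ℕ) (hk : 1 ≤ k) (n : ℕ) (hn : 1 ≤ n) :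
    (LS (n + k) n : ℤ) =
      2 ^ k * ∑ i ∈ Finset.Icc (k + 2) (3 * k), gam k (i : ℤ) * (Nat.choose (n + k + 1) i : ℤ) := by
  rw [LS_aux k n]
  congr 1
  refine (Finset.sum_subset ?_ ?_).symm
  · intro x hx
    simp only [Finset.mem_Icc] at hx
    simp only [Finset.mem_range]
    omega
  · intro x hxt hxs
    simp only [Finset.mem_Icc, not_and, not_le] at hxs
    simp only [Finset.mem_range] at hxt
    have hx : x < k + 2 := by omega
    rw [gam_low k hk (x : ℤ) (by push_cast; omega), zero_mul]
end

section
/- Let γ_k(x) = Σ_i γ(k,i) x^i ∈ ℚ[x]. Then for every k ≥ 0, γ_{k+1}(x) = (k(k+1)/2 − kx + x²)·x·γ_k(x) − (k + (k−2)x − 2x²)·x²·γ_k′(x) + ((1+x)²x³/2)·γ_k″(x), where ′ denotes the formal derivative of polynomials. -/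
open Polynomial

/-- The polynomial `γ_k(x) = Σ_i γ(k,i) xⁱ` in `ℚ[x]` (the coefficients `γ(k,i)`
vanish for `i > 3k`, so the sum below captures all of them). -/
noncomputable def gammaPoly (k : ℕ) : Polynomial ℚ :=
  ∑ i ∈ Finset.range (3 * k + 1), Polynomial.C ((gam k (i : ℤ) : ℚ)) * Polynomial.X ^ i

lemma gam_neg : ∀ (k : ℕ) (i : ℤ), i < 0 → gam k i = 0
  | 0, i, h => by simp [gam]; omega
  | k+1, i, h => by
    simp only [gam]
    rw [gam_neg k (i-1) (by omega), gam_neg k (i-2) (by omega), gam_neg k (i-3) (by omega)]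
    ring

lemma gam_large : ∀ (k : ℕ) (i : ℤ), 3 * k < i → gam k i = 0
  | 0, i, h => by simp [gam]; omega
  | k+1, i, h => by
    simp only [gam]
    rw [gam_large k (i-1) (by push_cast at h ⊢; omega),
        gam_large k (i-2) (by push_cast at h ⊢; omega),
        gam_large k (i-3) (by push_cast at h ⊢; omega)]
    ring

lemma coeff_gammaPoly (k : ℕ) (n : ℕ) : (gammaPoly k).coeff n = (gam k n : ℚ) := by
  unfold gammaPoly
  rw [Polynomial.finset_sum_coeff]
  simp only [Polynomial.coeff_C_mul, Polynomial.coeff_X_pow, mul_ite, mul_one, mul_zero]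
  rw [Finset.sum_ite_eq (Finset.range (3*k+1)) n]
  split
  · rfl
  · rw [gam_large k n (by rename_i h; simp [Finset.mem_range] at h; omega)]
    simp

lemma c2_cast (m : ℤ) : ((c2 m : ℤ) : ℚ) = (m*(m-1))/2 := by
  have h : (2:ℤ) ∣ m*(m-1) := by
    have := Int.even_mul_succ_self (m-1); simpa [mul_comm] using this.two_dvd
  rw [c2, Int.cast_div_charZero h]; push_cast [c2_cast]; ring

theorem gammaPoly_recurrence (k : ℕ) :
    gammaPoly (k + 1) =
      (Polynomial.C (((k : ℚ) * (k + 1)) / 2) - Polynomial.C (k : ℚ) * X + X ^ 2) * X *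
          gammaPoly k
        - (Polynomial.C (k : ℚ) + Polynomial.C ((k : ℚ) - 2) * X - 2 * X ^ 2) * X ^ 2 *
          (gammaPoly k).derivative
        + Polynomial.C ((1 : ℚ) / 2) * (1 + X) ^ 2 * X ^ 3 *
          ((gammaPoly k).derivative.derivative) := by
  set P := gammaPoly k with hP
  set D := P.derivative with hD
  set D2 := D.derivative with hD2
  have hrhs :
      (Polynomial.C (((k : ℚ) * (k + 1)) / 2) - Polynomial.C (k : ℚ) * X + X ^ 2) * X * P
        - (Polynomial.C (k : ℚ) + Polynomial.C ((k : ℚ) - 2) * X - 2 * X ^ 2) * X ^ 2 * D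
        + Polynomial.C ((1 : ℚ) / 2) * (1 + X) ^ 2 * X ^ 3 * D2
      = C (((k : ℚ) * (k + 1)) / 2) * (P * X ^ 1) - C (k:ℚ) * (P * X^2) + P * X^3
        - (C (k:ℚ) * (D * X^2) + C ((k:ℚ)-2) * (D * X^3) - 2 * (D * X^4))
        + (C ((1:ℚ)/2) * (D2 * X^3) + C ((1:ℚ)/2) * (2 * (D2 * X^4)) + C ((1:ℚ)/2) * (D2 * X^5)) := by
    ring
  rw [hrhs]
  ext n
  rw [coeff_gammaPoly]
  simp only [coeff_add, coeff_sub, coeff_C_mul, coeff_mul_X_pow', coeff_ofNat_mul,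
    hD2, hD, coeff_derivative, hP, coeff_gammaPoly]
  match n with
  | 0 =>
    norm_num [gam, gam_neg k (-1) (by norm_num), gam_neg k (-2) (by norm_num),
      gam_neg k (-3) (by norm_num)]
  | 1 =>
    norm_num [gam, gam_neg k (-1) (by norm_num), gam_neg k (-2) (by norm_num)]
    exact Or.inl (by push_cast [c2_cast]; ring)
  | 2 =>
    norm_num [gam, gam_neg k (-1) (by norm_num)]
    push_cast [c2_cast]; ring_nf
  | 3 =>
    norm_num [gam]
    push_cast [c2_cast]; ring_nf
  | 4 =>
    norm_num [gam]
    push_cast [c2_cast]; ring_nf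
  | (m+5) =>
    norm_num [gam, show m+5-1=m+4 from rfl, show m+5-2=m+3 from rfl, show m+5-3=m+2 from rfl,
      show m+5-4=m+1 from rfl, show m+3+1=m+4 from rfl, show m+2+1=m+3 from rfl,
      show m+1+1=m+2 from rfl,
      show ((m:ℤ)+5-1) = (m:ℤ)+4 from by ring, show ((m:ℤ)+5-2) = (m:ℤ)+3 from by ring,
      show ((m:ℤ)+5-3) = (m:ℤ)+2 from by ring]
    push_cast [c2_cast]; ring_nf
end
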